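/- The tableau calculus T_{K_m(¬)}⁺, obtained from T_{K_m(¬)} by adding the rule (□¬): T([¬r]p,x) / T_R(r,x,y) | T(p,y) (for any label y on the branch), is sound and constructively complete for the logic K_m(¬): every fully expanded T_{K_m(¬)}⁺-tableau for a satisfiable finite set of K_m(¬)-formulas has an open branch, and from every open branch B of a fully expanded T_{K_m(¬)}⁺-tableau a K_m(¬)-model with domain the labels of B can be constructed in which every tableau formula of B is true. -/

import Mathlib

set_option autoImplicit false

namespace KmNotTableau

/-- Relation terms of the logic `K_m(¬)`: `α ::= a_1 | … | a_m | ¬α`. -/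
inductive RTerm (m : ℕ) : Type
  | atom : Fin m → RTerm m
  | neg : RTerm m → RTerm m

/-- Formulas of the logic `K_m(¬)`: `φ ::= p | ¬φ | φ∨φ | [α]φ`. -/
inductive Fm (m : ℕ) : Type
  | var : ℕ → Fm m
  | neg : Fm m → Fm m
  | or : Fm m → Fm m → Fm m
  | box : RTerm m → Fm m → Fm m

/-- A `K_m(¬)`-model `M = (W, (R_a)_a, V)` with `W` nonempty. -/
structure KModel (m : ℕ) where
  W : Type
  ne : Nonempty W
  R : Fin m → W → W → Prop
  V : ℕ → W → Prop

/-- Interpretation of relation terms: `R_{¬α} = (W×W) ∖ R_α`. -/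
def KModel.RT {m : ℕ} (M : KModel m) : RTerm m → M.W → M.W → Prop
  | .atom a => M.R a
  | .neg α => fun v w => ¬ M.RT α v w

/-- Satisfaction in a `K_m(¬)`-model. -/
def KModel.sat {m : ℕ} (M : KModel m) : M.W → Fm m → Prop
  | v, .var p => M.V p v
  | v, .neg φ => ¬ M.sat v φ
  | v, .or φ ψ => M.sat v φ ∨ M.sat v ψ
  | v, .box α φ => ∀ w, M.RT α v w → M.sat w φ

/-- A set of formulas is satisfiable if some model and world satisfy all its members. -/
def Satisfiable {m : ℕ} (N : Set (Fm m)) : Prop :=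
  ∃ (M : KModel m) (v : M.W), ∀ φ ∈ N, M.sat v φ

/-- Labels: terms generated from the initial constant `a₀` and Skolem terms `f(α,φ,t)`. -/
inductive Label (m : ℕ) : Type
  | a0 : Label m
  | sk : RTerm m → Fm m → Label m → Label m

/-- Tableau formulas: `T(φ,t)`, `F(φ,t)`, `T_R(α,t,t')`, `F_R(α,t,t')`. -/
inductive TabFm (m : ℕ) : Type
  | T : Fm m → Label m → TabFm m
  | F : Fm m → Label m → TabFm m
  | TR : RTerm m → Label m → Label m → TabFm m
  | FR : RTerm m → Label m → Label m → TabFm m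

/-- The labels occurring in a tableau formula. -/
def TabFm.labels {m : ℕ} : TabFm m → Set (Label m)
  | .T _ t => {t}
  | .F _ t => {t}
  | .TR _ t t' => {t, t'}
  | .FR _ t t' => {t, t'}

/-- The labels occurring in a set of tableau formulas (the initial label `a₀`,
introduced at the root, always counts as occurring). -/
def Lab {m : ℕ} (B : Set (TabFm m)) : Set (Label m) :=
  insert Label.a0 {t | ∃ f ∈ B, t ∈ f.labels}

/-- A calculus: `C s ds` holds if, on a branch whose set of formulas is `s`, some rule
of the calculus is applicable with denominator instances `ds` (a closure rule
application has `ds = []`). -/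
abbrev Calc (m : ℕ) := Set (TabFm m) → List (Set (TabFm m)) → Prop

/-- The root node `{T(φ,a₀) | φ ∈ N}` of a tableau for input `N`. -/
def initial {m : ℕ} (N : Set (Fm m)) : Set (TabFm m) :=
  {f | ∃ φ ∈ N, f = TabFm.T φ Label.a0}

/-- A tableau for input `N` in calculus `C`: a finitely branching tree of sets of tableau
formulas (nodes indexed by positions `List ℕ`, children of `p` being `p ++ [i]`), whose
root is `{T(φ,a₀) | φ ∈ N}`, and such that the children of every node are obtained by
applying a rule of `C`: each child adds one denominator instance to the node's set. -/
structure Tableau (m : ℕ) (C : Calc m) (N : Set (Fm m)) where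
  node : List ℕ → Option (Set (TabFm m))
  rootEq : node [] = some (initial N)
  tree : ∀ (p : List ℕ) (i : ℕ), node (p ++ [i]) ≠ none → node p ≠ none
  step : ∀ (p : List ℕ) (s : Set (TabFm m)), node p = some s →
    (∀ i : ℕ, node (p ++ [i]) = none) ∨
    (∃ ds, C s ds ∧ ∀ i : ℕ, node (p ++ [i]) = (ds[i]?).map (fun d => s ∪ d))

/-- A branch of a tableau: a maximal path from the root (represented by its
set of positions, a maximal chain under the prefix order). -/
structure Branch {m : ℕ} {C : Calc m} {N : Set (Fm m)} (Tb : Tableau m C N) where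
  pos : Set (List ℕ)
  inTree : ∀ p ∈ pos, Tb.node p ≠ none
  chain : ∀ p ∈ pos, ∀ q ∈ pos, p <+: q ∨ q <+: p
  downClosed : ∀ p ∈ pos, ∀ q : List ℕ, q <+: p → q ∈ pos
  maximal : ∀ q : List ℕ, Tb.node q ≠ none → (∀ p ∈ pos, p <+: q ∨ q <+: p) → q ∈ pos

/-- The set of tableau formulas occurring on a branch. -/
def Branch.fmls {m : ℕ} {C : Calc m} {N : Set (Fm m)} {Tb : Tableau m C N}
    (Br : Branch Tb) : Set (TabFm m) :=
  {f | ∃ p ∈ Br.pos, ∃ s, Tb.node p = some s ∧ f ∈ s}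

/-- A branch is open if no closure rule has been applied (is applicable) on it. -/
def Branch.IsOpen {m : ℕ} {C : Calc m} {N : Set (Fm m)} {Tb : Tableau m C N}
    (Br : Branch Tb) : Prop := ¬ C Br.fmls []

/-- A tableau is fully expanded if on every open branch every applicable rule has been
applied, i.e. some denominator instance of the rule is already contained in the branch. -/
def Tableau.Expanded {m : ℕ} {C : Calc m} {N : Set (Fm m)} (Tb : Tableau m C N) : Prop :=
  ∀ Br : Branch Tb, Br.IsOpen → ∀ ds, C Br.fmls ds → ∃ d ∈ ds, d ⊆ Br.fmls

/-- A `K_m(¬)`-model whose domain is (a set of) labels: the model `I(B)` constructed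
from a branch has domain the set of labels occurring in `B`. -/
structure LModel (m : ℕ) where
  R : Fin m → Label m → Label m → Prop
  V : ℕ → Label m → Prop

/-- Interpretation of relation terms in a label model: `R_{¬α}` is the complement. -/
def LModel.RT {m : ℕ} (M : LModel m) : RTerm m → Label m → Label m → Prop
  | .atom a => M.R a
  | .neg α => fun t t' => ¬ M.RT α t t'

/-- Satisfaction in a label model relativised to its domain `D`. -/
def LModel.sat {m : ℕ} (M : LModel m) (D : Set (Label m)) : Label m → Fm m → Prop
  | t, .var p => M.V p t
  | t, .neg φ => ¬ M.sat D t φ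
  | t, .or φ ψ => M.sat D t φ ∨ M.sat D t ψ
  | t, .box α φ => ∀ t' ∈ D, M.RT α t t' → M.sat D t' φ

/-- Every tableau formula of `B` is true in the model `M` with domain `Lab B`:
`T(φ,t) ∈ B` implies `φ` holds at `t`; `F(φ,t) ∈ B` implies `φ` fails at `t`;
`T_R(α,t,t') ∈ B` implies `(t,t') ∈ R_α`; `F_R(α,t,t') ∈ B` implies `(t,t') ∉ R_α`. -/
def Reflects {m : ℕ} (M : LModel m) (B : Set (TabFm m)) : Prop :=
  (∀ φ t, TabFm.T φ t ∈ B → M.sat (Lab B) t φ) ∧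
  (∀ φ t, TabFm.F φ t ∈ B → ¬ M.sat (Lab B) t φ) ∧
  (∀ α t t', TabFm.TR α t t' ∈ B → M.RT α t t') ∧
  (∀ α t t', TabFm.FR α t t' ∈ B → ¬ M.RT α t t')

/-- The calculus `T_{K_m(¬)}`. -/
def TKmNot (m : ℕ) : Calc m := fun s ds =>
  -- (¬⁺) T(¬p,x) / F(p,x)
  (∃ φ x, TabFm.T (.neg φ) x ∈ s ∧ ds = [{TabFm.F φ x}]) ∨
  -- (¬⁻) F(¬p,x) / T(p,x)
  (∃ φ x, TabFm.F (.neg φ) x ∈ s ∧ ds = [{TabFm.T φ x}]) ∨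
  -- (∨⁺) T(p∨q,x) / T(p,x) | T(q,x)
  (∃ φ ψ x, TabFm.T (.or φ ψ) x ∈ s ∧ ds = [{TabFm.T φ x}, {TabFm.T ψ x}]) ∨
  -- (∨⁻) F(p∨q,x) / F(p,x), F(q,x)
  (∃ φ ψ x, TabFm.F (.or φ ψ) x ∈ s ∧ ds = [{TabFm.F φ x, TabFm.F ψ x}]) ∨
  -- (box) T([r]p,x) / F_R(r,x,y) | T(p,y), for any label y occurring on the branch
  (∃ α φ x y, TabFm.T (.box α φ) x ∈ s ∧ y ∈ Lab s ∧
    ds = [{TabFm.FR α x y}, {TabFm.T φ y}]) ∨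
  -- (dia) F([r]p,x) / T_R(r,x,f(r,p,x)), F(p,f(r,p,x))
  (∃ α φ x, TabFm.F (.box α φ) x ∈ s ∧
    ds = [{TabFm.TR α x (Label.sk α φ x), TabFm.F φ (Label.sk α φ x)}]) ∨
  -- closure rules
  (∃ φ x, TabFm.T φ x ∈ s ∧ TabFm.F φ x ∈ s ∧ ds = []) ∨
  (∃ α x y, TabFm.TR α x y ∈ s ∧ TabFm.FR α x y ∈ s ∧ ds = []) ∨
  -- (¬R⁺) T_R(¬r,x,y) / F_R(r,x,y)
  (∃ α x y, TabFm.TR (.neg α) x y ∈ s ∧ ds = [{TabFm.FR α x y}]) ∨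
  -- (¬R⁻) F_R(¬r,x,y) / T_R(r,x,y)
  (∃ α x y, TabFm.FR (.neg α) x y ∈ s ∧ ds = [{TabFm.TR α x y}])

/-- The calculus `T_{K_m(¬)}⁺`: `T_{K_m(¬)}` extended with the rule
(□¬): `T([¬r]p,x) / T_R(r,x,y) | T(p,y)` (for any label `y` on the branch). -/
def TKmNotPlus (m : ℕ) : Calc m := fun s ds =>
  TKmNot m s ds ∨
  -- (□¬) T([¬r]p,x) / T_R(r,x,y) | T(p,y), for any label y occurring on the branch
  (∃ α φ x y, TabFm.T (.box (.neg α) φ) x ∈ s ∧ y ∈ Lab s ∧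
    ds = [{TabFm.TR α x y}, {TabFm.T φ y}])


/-! ### Auxiliary material for the proof -/

section Aux

variable {m : ℕ}

lemma prefix_snoc {γ : Type*} {p l : List γ} {a : γ} (h : p <+: l ++ [a]) :
    p = l ++ [a] ∨ p <+: l := by
  by_cases hlen : l.length + 1 ≤ p.length
  · left
    refine h.eq_of_length ?_
    have := h.length_le
    simp only [List.length_append, List.length_singleton] at this ⊢
    omega
  · right
    have hle : p.length ≤ l.length := by omega
    have hp := List.prefix_iff_eq_take.1 h
    rw [List.take_append_of_le_length hle] at hp
    rw [hp]
    exact List.take_prefix _ _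

/-- Truth of a tableau formula in a `K_m(¬)`-model under a label interpretation. -/
def holds (M : KModel m) (ι : Label m → M.W) : TabFm m → Prop
  | .T φ t => M.sat (ι t) φ
  | .F φ t => ¬ M.sat (ι t) φ
  | .TR α t t' => M.RT α (ι t) (ι t')
  | .FR α t t' => ¬ M.RT α (ι t) (ι t')

-- The canonical interpretation of labels in a model: Skolem terms are sent to
-- witnesses when they exist.
open Classical in
noncomputable def iota (M : KModel m) (v : M.W) : Label m → M.W
  | .a0 => v
  | .sk α φ x =>
      if h : ∃ w, M.RT α (iota M v x) w ∧ ¬ M.sat w φ then h.choose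
      else Classical.choice M.ne

lemma iota_sk (M : KModel m) (v : M.W) (α : RTerm m) (φ : Fm m) (x : Label m)
    (h : ¬ M.sat (iota M v x) (.box α φ)) :
    M.RT α (iota M v x) (iota M v (.sk α φ x)) ∧ ¬ M.sat (iota M v (.sk α φ x)) φ := by
  have h' : ∃ w, M.RT α (iota M v x) w ∧ ¬ M.sat w φ := by
    simp only [KModel.sat] at h; push_neg at h; exact h
  have : iota M v (.sk α φ x) = h'.choose := by rw [iota, dif_pos h']
  rw [this]
  exact h'.choose_spec

/-- Local soundness of every rule of `T_{K_m(¬)}⁺`. -/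
lemma local_sound (M : KModel m) (v : M.W) {s : Set (TabFm m)} {ds : List (Set (TabFm m))}
    (hC : TKmNotPlus m s ds) (hs : ∀ f ∈ s, holds M (iota M v) f) :
    ∃ d ∈ ds, ∀ f ∈ d, holds M (iota M v) f := by
  set ι := iota M v with hι
  rcases hC with (⟨φ, x, hmem, rfl⟩ | ⟨φ, x, hmem, rfl⟩ | ⟨φ, ψ, x, hmem, rfl⟩ |
      ⟨φ, ψ, x, hmem, rfl⟩ | ⟨α, φ, x, y, hmem, hy, rfl⟩ | ⟨α, φ, x, hmem, rfl⟩ |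
      ⟨φ, x, h1, h2, rfl⟩ | ⟨α, x, y, h1, h2, rfl⟩ | ⟨α, x, y, hmem, rfl⟩ |
      ⟨α, x, y, hmem, rfl⟩) | ⟨α, φ, x, y, hmem, hy, rfl⟩
  · -- (¬⁺)
    refine ⟨_, List.mem_singleton.2 rfl, ?_⟩
    rintro f hf; rw [Set.mem_singleton_iff] at hf; subst hf
    have := hs _ hmem
    simpa only [holds, KModel.sat] using this
  · -- (¬⁻)
    refine ⟨_, List.mem_singleton.2 rfl, ?_⟩
    rintro f hf; rw [Set.mem_singleton_iff] at hf; subst hf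
    have := hs _ hmem
    simp only [holds, KModel.sat, not_not] at this ⊢
    exact this
  · -- (∨⁺)
    have := hs _ hmem
    simp only [holds, KModel.sat] at this
    rcases this with h | h
    · exact ⟨{TabFm.T φ x}, by simp, by
        rintro f hf; rw [Set.mem_singleton_iff] at hf; subst hf
        show M.sat (ι x) φ; exact h⟩
    · exact ⟨{TabFm.T ψ x}, by simp, by
        rintro f hf; rw [Set.mem_singleton_iff] at hf; subst hf
        show M.sat (ι x) ψ; exact h⟩
  · -- (∨⁻)
    have := hs _ hmem
    simp only [holds, KModel.sat] at this
    push_neg at this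
    refine ⟨_, List.mem_singleton.2 rfl, ?_⟩
    rintro f hf
    rcases hf with hf | hf
    · subst hf; exact this.1
    · rw [Set.mem_singleton_iff] at hf; subst hf; exact this.2
  · -- (box)
    by_cases hR : M.RT α (ι x) (ι y)
    · have := hs _ hmem
      simp only [holds, KModel.sat] at this
      refine ⟨{TabFm.T φ y}, by simp, ?_⟩
      rintro f hf; rw [Set.mem_singleton_iff] at hf; subst hf
      exact this _ hR
    · refine ⟨{TabFm.FR α x y}, by simp, ?_⟩
      rintro f hf; rw [Set.mem_singleton_iff] at hf; subst hf
      exact hR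
  · -- (dia)
    have := hs _ hmem
    have hw := iota_sk M v α φ x (by simpa only [holds] using this)
    refine ⟨_, List.mem_singleton.2 rfl, ?_⟩
    rintro f hf
    rcases hf with hf | hf
    · subst hf; exact hw.1
    · rw [Set.mem_singleton_iff] at hf; subst hf; exact hw.2
  · -- closure T/F
    exact absurd (hs _ h1) (hs _ h2)
  · -- closure TR/FR
    exact absurd (hs _ h1) (hs _ h2)
  · -- (¬R⁺)
    refine ⟨_, List.mem_singleton.2 rfl, ?_⟩
    rintro f hf; rw [Set.mem_singleton_iff] at hf; subst hf
    have := hs _ hmem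
    simpa only [holds, KModel.RT] using this
  · -- (¬R⁻)
    refine ⟨_, List.mem_singleton.2 rfl, ?_⟩
    rintro f hf; rw [Set.mem_singleton_iff] at hf; subst hf
    have := hs _ hmem
    simp only [holds, KModel.RT, not_not] at this ⊢
    exact this
  · -- (□¬)
    by_cases hR : M.RT α (ι x) (ι y)
    · refine ⟨{TabFm.TR α x y}, by simp, ?_⟩
      rintro f hf; rw [Set.mem_singleton_iff] at hf; subst hf
      exact hR
    · have := hs _ hmem
      simp only [holds, KModel.sat] at this
      refine ⟨{TabFm.T φ y}, by simp, ?_⟩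
      rintro f hf; rw [Set.mem_singleton_iff] at hf; subst hf
      exact this _ (by simpa only [KModel.RT] using hR)

end Aux

section Path

variable {m : ℕ} {N : Set (Fm m)}

/-- A node position is good if its set of formulas is true under the canonical
interpretation. -/
def Good (Tb : Tableau m (TKmNotPlus m) N) (M : KModel m) (v : M.W) (p : List ℕ) : Prop :=
  ∃ s, Tb.node p = some s ∧ ∀ f ∈ s, holds M (iota M v) f

lemma extend (Tb : Tableau m (TKmNotPlus m) N) (M : KModel m) (v : M.W) {p : List ℕ}
    (hg : Good Tb M v p) :
    (∃ i, Good Tb M v (p ++ [i])) ∨ ∀ i, Tb.node (p ++ [i]) = none := by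
  obtain ⟨s, hs, hh⟩ := hg
  rcases Tb.step p s hs with hn | ⟨ds, hC, hch⟩
  · right; exact hn
  · obtain ⟨d, hd, hdh⟩ := local_sound M v hC hh
    obtain ⟨i, hi⟩ := List.mem_iff_getElem?.1 hd
    left
    refine ⟨i, s ∪ d, ?_, ?_⟩
    · rw [hch i, hi]; rfl
    · rintro f (hf | hf)
      exacts [hh f hf, hdh f hf]

open Classical in
/-- The chosen good path through the tableau. -/
noncomputable def seq (Tb : Tableau m (TKmNotPlus m) N) (M : KModel m) (v : M.W) :
    ℕ → Option (List ℕ)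
  | 0 => some []
  | n+1 => (seq Tb M v n).bind fun p =>
      if h : ∃ i, Good Tb M v (p ++ [i]) then some (p ++ [h.choose]) else none

variable {Tb : Tableau m (TKmNotPlus m) N} {M : KModel m} {v : M.W}

lemma seq_succ_some {n : ℕ} {p : List ℕ} (h : seq Tb M v (n+1) = some p) :
    ∃ q, seq Tb M v n = some q ∧
      ∃ hg : ∃ i, Good Tb M v (q ++ [i]), p = q ++ [hg.choose] := by
  rw [seq] at h
  obtain ⟨q, hq, hq'⟩ := Option.bind_eq_some_iff.1 h
  refine ⟨q, hq, ?_⟩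
  split at hq'
  · rename_i hg
    exact ⟨hg, (Option.some_injective _ hq').symm⟩
  · exact absurd hq' (by simp)

lemma seq_length : ∀ {n : ℕ} {p : List ℕ}, seq Tb M v n = some p → p.length = n := by
  intro n
  induction n with
  | zero => intro p h; rw [seq] at h; simp at h; subst h; rfl
  | succ n ih =>
    intro p h
    obtain ⟨q, hq, hg, rfl⟩ := seq_succ_some h
    simp [ih hq]

lemma seq_good (hg0 : Good Tb M v []) :
    ∀ {n : ℕ} {p : List ℕ}, seq Tb M v n = some p → Good Tb M v p := by
  intro n
  induction n with
  | zero => intro p h; rw [seq] at h; simp at h; subst h; exact hg0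
  | succ n ih =>
    intro p h
    obtain ⟨q, hq, hg, rfl⟩ := seq_succ_some h
    exact hg.choose_spec

lemma seq_mono : ∀ {n k : ℕ} {p q : List ℕ}, k ≤ n → seq Tb M v n = some p →
    seq Tb M v k = some q → q <+: p := by
  intro n
  induction n with
  | zero => intro k p q hk hp hq
            interval_cases k
            rw [hp] at hq
            exact (Option.some_injective _ hq) ▸ List.prefix_refl _
  | succ n ih =>
    intro k p q hk hp hq
    obtain ⟨r, hr, hg, rfl⟩ := seq_succ_some hp
    rcases Nat.lt_or_ge k (n+1) with h | h
    · exact (ih (Nat.lt_succ_iff.1 h) hr hq).trans ⟨[hg.choose], rfl⟩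
    · have : k = n + 1 := le_antisymm hk h
      subst this
      rw [hp] at hq
      exact (Option.some_injective _ hq) ▸ List.prefix_refl _

lemma seq_prefix_closed : ∀ {n : ℕ} {p q : List ℕ}, seq Tb M v n = some p → q <+: p →
    seq Tb M v q.length = some q := by
  intro n
  induction n with
  | zero =>
    intro p q hp hq
    rw [seq] at hp; simp at hp; subst hp
    rw [List.prefix_nil.1 hq]
    simp [seq]
  | succ n ih =>
    intro p q hp hq
    obtain ⟨r, hr, hg, rfl⟩ := seq_succ_some hp
    rcases prefix_snoc hq with h' | hq'
    · rw [h', show (r ++ [hg.choose]).length = n + 1 from seq_length hp]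
      exact hp
    · exact ih hr hq'

/-- Ancestors of nodes in the tree are in the tree. -/
lemma node_ancestor (Tb : Tableau m (TKmNotPlus m) N) :
    ∀ q : List ℕ, Tb.node q ≠ none → ∀ p : List ℕ, p <+: q → Tb.node p ≠ none := by
  intro q
  induction q using List.reverseRecOn with
  | nil =>
    intro h p hp
    rw [List.prefix_nil.1 hp]; exact h
  | append_singleton l a ih =>
    intro h p hp
    rcases prefix_snoc hp with rfl | hp'
    · exact h
    · exact ih (Tb.tree l a h) p hp'

end Path

section Rules

variable {m : ℕ} {s : Set (TabFm m)}

lemma ruleNotT {φ : Fm m} {x : Label m} (h : TabFm.T (.neg φ) x ∈ s) :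
    TKmNotPlus m s [{TabFm.F φ x}] := Or.inl (Or.inl ⟨φ, x, h, rfl⟩)

lemma ruleNotF {φ : Fm m} {x : Label m} (h : TabFm.F (.neg φ) x ∈ s) :
    TKmNotPlus m s [{TabFm.T φ x}] := Or.inl (Or.inr (Or.inl ⟨φ, x, h, rfl⟩))

lemma ruleOrT {φ ψ : Fm m} {x : Label m} (h : TabFm.T (.or φ ψ) x ∈ s) :
    TKmNotPlus m s [{TabFm.T φ x}, {TabFm.T ψ x}] :=
  Or.inl (Or.inr (Or.inr (Or.inl ⟨φ, ψ, x, h, rfl⟩)))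

lemma ruleOrF {φ ψ : Fm m} {x : Label m} (h : TabFm.F (.or φ ψ) x ∈ s) :
    TKmNotPlus m s [{TabFm.F φ x, TabFm.F ψ x}] :=
  Or.inl (Or.inr (Or.inr (Or.inr (Or.inl ⟨φ, ψ, x, h, rfl⟩))))

lemma ruleBox {α : RTerm m} {φ : Fm m} {x y : Label m} (h : TabFm.T (.box α φ) x ∈ s)
    (hy : y ∈ Lab s) : TKmNotPlus m s [{TabFm.FR α x y}, {TabFm.T φ y}] :=
  Or.inl (Or.inr (Or.inr (Or.inr (Or.inr (Or.inl ⟨α, φ, x, y, h, hy, rfl⟩)))))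

lemma ruleDia {α : RTerm m} {φ : Fm m} {x : Label m} (h : TabFm.F (.box α φ) x ∈ s) :
    TKmNotPlus m s [{TabFm.TR α x (Label.sk α φ x), TabFm.F φ (Label.sk α φ x)}] :=
  Or.inl (Or.inr (Or.inr (Or.inr (Or.inr (Or.inr (Or.inl ⟨α, φ, x, h, rfl⟩))))))

lemma ruleCloTF {φ : Fm m} {x : Label m} (h1 : TabFm.T φ x ∈ s) (h2 : TabFm.F φ x ∈ s) :
    TKmNotPlus m s [] :=
  Or.inl (Or.inr (Or.inr (Or.inr (Or.inr (Or.inr (Or.inr (Or.inl ⟨φ, x, h1, h2, rfl⟩)))))))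

lemma ruleCloR {α : RTerm m} {x y : Label m} (h1 : TabFm.TR α x y ∈ s)
    (h2 : TabFm.FR α x y ∈ s) : TKmNotPlus m s [] :=
  Or.inl (Or.inr (Or.inr (Or.inr (Or.inr (Or.inr (Or.inr (Or.inr (Or.inl
    ⟨α, x, y, h1, h2, rfl⟩))))))))

lemma ruleNegRT {α : RTerm m} {x y : Label m} (h : TabFm.TR (.neg α) x y ∈ s) :
    TKmNotPlus m s [{TabFm.FR α x y}] :=
  Or.inl (Or.inr (Or.inr (Or.inr (Or.inr (Or.inr (Or.inr (Or.inr (Or.inr (Or.inl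
    ⟨α, x, y, h, rfl⟩)))))))))

lemma ruleNegRF {α : RTerm m} {x y : Label m} (h : TabFm.FR (.neg α) x y ∈ s) :
    TKmNotPlus m s [{TabFm.TR α x y}] :=
  Or.inl (Or.inr (Or.inr (Or.inr (Or.inr (Or.inr (Or.inr (Or.inr (Or.inr (Or.inr
    ⟨α, x, y, h, rfl⟩)))))))))

end Rules
/-- The tableau calculus `T_{K_m(¬)}⁺`, obtained from `T_{K_m(¬)}` by
adding the rule (□¬): `T([¬r]p,x) / T_R(r,x,y) | T(p,y)` (for any label `y` on the
branch), is sound and constructively complete for the logic `K_m(¬)`: every fully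
expanded `T_{K_m(¬)}⁺`-tableau for a satisfiable finite set of `K_m(¬)`-formulas has an
open branch, and from every open branch `B` of a fully expanded `T_{K_m(¬)}⁺`-tableau a
`K_m(¬)`-model with domain the labels of `B` can be constructed in which every tableau
formula of `B` is true. -/
theorem TKmNotPlus_sound_and_constructively_complete (m : ℕ) :
    (∀ N : Set (Fm m), N.Finite → Satisfiable N →
      ∀ Tb : Tableau m (TKmNotPlus m) N, Tb.Expanded → ∃ Br : Branch Tb, Br.IsOpen) ∧
    (∀ (N : Set (Fm m)) (Tb : Tableau m (TKmNotPlus m) N), Tb.Expanded →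
      ∀ Br : Branch Tb, Br.IsOpen → ∃ M : LModel m, Reflects M Br.fmls) := by
  constructor
  · -- Soundness
    rintro N _hfin ⟨M, v, hsat⟩ Tb _hexp
    classical
    have hiota0 : iota M v Label.a0 = v := by rw [iota]
    have hg0 : Good Tb M v [] := by
      refine ⟨initial N, Tb.rootEq, ?_⟩
      rintro f ⟨φ, hφ, rfl⟩
      show M.sat (iota M v Label.a0) φ
      rw [hiota0]
      exact hsat φ hφ
    refine ⟨⟨{p | ∃ n, seq Tb M v n = some p}, ?_, ?_, ?_, ?_⟩, ?_⟩
    · -- inTree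
      rintro p ⟨n, hn⟩
      obtain ⟨s, hs, -⟩ := seq_good hg0 hn
      rw [hs]
      simp
    · -- chain
      rintro p ⟨n, hn⟩ q ⟨k, hk⟩
      rcases le_total k n with h | h
      · exact Or.inr (seq_mono h hn hk)
      · exact Or.inl (seq_mono h hk hn)
    · -- downClosed
      rintro p ⟨n, hn⟩ q hq
      exact ⟨q.length, seq_prefix_closed hn hq⟩
    · -- maximal
      intro q hq hcomp
      by_cases hsq : (seq Tb M v q.length).isSome
      · obtain ⟨p, hp⟩ := Option.isSome_iff_exists.1 hsq
        have hpl : p.length = q.length := seq_length hp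
        rcases hcomp p ⟨q.length, hp⟩ with h | h
        · have : p = q := h.eq_of_length hpl
          exact this ▸ ⟨q.length, hp⟩
        · have : q = p := h.eq_of_length hpl.symm
          exact ⟨q.length, this ▸ hp⟩
      · have hnone : ∃ n, seq Tb M v n = none :=
          ⟨q.length, Option.not_isSome_iff_eq_none.1 hsq⟩
        have hlast : seq Tb M v (Nat.find hnone) = none := Nat.find_spec hnone
        have hn0pos : Nat.find hnone ≠ 0 := by
          intro h
          rw [h] at hlast
          simp [seq] at hlast
        obtain ⟨k, hk⟩ := Nat.exists_eq_succ_of_ne_zero hn0pos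
        have hkprev : seq Tb M v k ≠ none := Nat.find_min hnone (by omega)
        obtain ⟨p, hp⟩ := Option.ne_none_iff_exists'.1 hkprev
        have hgp : Good Tb M v p := seq_good hg0 hp
        have hnog : ¬ ∃ i, Good Tb M v (p ++ [i]) := by
          intro hgood
          have hstep : seq Tb M v (k + 1) = some (p ++ [hgood.choose]) := by
            rw [seq, hp]
            simp [dif_pos hgood]
          rw [hk, Nat.succ_eq_add_one] at hlast
          rw [hlast] at hstep
          exact Option.some_ne_none _ hstep.symm
        have hchild : ∀ i, Tb.node (p ++ [i]) = none :=
          (extend Tb M v hgp).resolve_left hnog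
        rcases hcomp p ⟨k, hp⟩ with h | h
        · rcases eq_or_ne p q with rfl | hne
          · exact ⟨k, hp⟩
          · obtain ⟨t, rfl⟩ := h
            have ht : t ≠ [] := by rintro rfl; simp at hne
            have hpre : (p ++ [t.head ht]) <+: (p ++ t) := by
              refine ⟨t.tail, ?_⟩
              rw [List.append_assoc, List.singleton_append, List.cons_head_tail]
            exact absurd (hchild (t.head ht)) (node_ancestor Tb _ hq _ hpre)
        · exact ⟨q.length, seq_prefix_closed hp h⟩
    · -- the branch is open
      intro hC
      have hall : ∀ f : TabFm m, (∃ p, (∃ n, seq Tb M v n = some p) ∧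
          ∃ s, Tb.node p = some s ∧ f ∈ s) → holds M (iota M v) f := by
        rintro f ⟨p, ⟨n, hn⟩, s, hs, hf⟩
        obtain ⟨s', hs', hh⟩ := seq_good hg0 hn
        rw [hs] at hs'
        exact hh f ((Option.some_injective _ hs') ▸ hf)
      rcases hC with (⟨φ, x, _, h⟩ | ⟨φ, x, _, h⟩ | ⟨φ, ψ, x, _, h⟩ | ⟨φ, ψ, x, _, h⟩ |
          ⟨α, φ, x, y, _, _, h⟩ | ⟨α, φ, x, _, h⟩ | ⟨φ, x, hT, hF, -⟩ |
          ⟨α, x, y, hT, hF, -⟩ | ⟨α, x, y, _, h⟩ | ⟨α, x, y, _, h⟩) | ⟨α, φ, x, y, _, _, h⟩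
      · exact List.cons_ne_nil _ _ h.symm
      · exact List.cons_ne_nil _ _ h.symm
      · exact List.cons_ne_nil _ _ h.symm
      · exact List.cons_ne_nil _ _ h.symm
      · exact List.cons_ne_nil _ _ h.symm
      · exact List.cons_ne_nil _ _ h.symm
      · exact absurd (hall _ hT) (hall _ hF)
      · exact absurd (hall _ hT) (hall _ hF)
      · exact List.cons_ne_nil _ _ h.symm
      · exact List.cons_ne_nil _ _ h.symm
      · exact List.cons_ne_nil _ _ h.symm
  · -- Constructive completeness
    intro N Tb hexp Br hopen
    have happ : ∀ ds, TKmNotPlus m Br.fmls ds → ∃ d ∈ ds, d ⊆ Br.fmls := hexp Br hopen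
    refine ⟨⟨fun a t t' => TabFm.TR (.atom a) t t' ∈ Br.fmls,
            fun p t => TabFm.T (.var p) t ∈ Br.fmls⟩, ?_⟩
    set M : LModel m := ⟨fun a t t' => TabFm.TR (.atom a) t t' ∈ Br.fmls,
            fun p t => TabFm.T (.var p) t ∈ Br.fmls⟩ with hM
    have hrel : ∀ α : RTerm m, ∀ t t', (TabFm.TR α t t' ∈ Br.fmls → M.RT α t t') ∧
        (TabFm.FR α t t' ∈ Br.fmls → ¬ M.RT α t t') := by
      intro α
      induction α with
      | atom a =>
        intro t t'
        refine ⟨fun h => h, fun h hR => ?_⟩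
        exact hopen (ruleCloR hR h)
      | neg α ih =>
        intro t t'
        constructor
        · intro h
          obtain ⟨d, hd, hsub⟩ := happ [{TabFm.FR α t t'}] (ruleNegRT h)
          rw [List.mem_singleton] at hd
          subst hd
          exact (ih t t').2 (hsub rfl)
        · intro h hR
          obtain ⟨d, hd, hsub⟩ := happ [{TabFm.TR α t t'}] (ruleNegRF h)
          rw [List.mem_singleton] at hd
          subst hd
          exact hR ((ih t t').1 (hsub rfl))
    have hfm : ∀ φ : Fm m, (∀ t, TabFm.T φ t ∈ Br.fmls → M.sat (Lab Br.fmls) t φ) ∧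
        (∀ t, TabFm.F φ t ∈ Br.fmls → ¬ M.sat (Lab Br.fmls) t φ) := by
      intro φ
      induction φ with
      | var p =>
        refine ⟨fun t h => h, fun t h hs => ?_⟩
        exact hopen (ruleCloTF hs h)
      | neg φ ih =>
        constructor
        · intro t h
          obtain ⟨d, hd, hsub⟩ := happ [{TabFm.F φ t}] (ruleNotT h)
          rw [List.mem_singleton] at hd
          subst hd
          exact ih.2 t (hsub rfl)
        · intro t h hs
          obtain ⟨d, hd, hsub⟩ := happ [{TabFm.T φ t}] (ruleNotF h)
          rw [List.mem_singleton] at hd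
          subst hd
          exact hs (ih.1 t (hsub rfl))
      | or φ ψ ihφ ihψ =>
        constructor
        · intro t h
          obtain ⟨d, hd, hsub⟩ := happ [{TabFm.T φ t}, {TabFm.T ψ t}] (ruleOrT h)
          simp only [List.mem_cons, List.mem_singleton, List.not_mem_nil, or_false] at hd
          rcases hd with rfl | rfl
          · exact Or.inl (ihφ.1 t (hsub rfl))
          · exact Or.inr (ihψ.1 t (hsub rfl))
        · intro t h hs
          obtain ⟨d, hd, hsub⟩ := happ [{TabFm.F φ t, TabFm.F ψ t}] (ruleOrF h)
          rw [List.mem_singleton] at hd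
          subst hd
          rcases hs with hs | hs
          · exact ihφ.2 t (hsub (Set.mem_insert _ _)) hs
          · exact ihψ.2 t (hsub (Set.mem_insert_of_mem _ rfl)) hs
      | box α φ ih =>
        constructor
        · intro t h
          intro t' ht' hR
          obtain ⟨d, hd, hsub⟩ := happ [{TabFm.FR α t t'}, {TabFm.T φ t'}] (ruleBox h ht')
          simp only [List.mem_cons, List.mem_singleton, List.not_mem_nil, or_false] at hd
          rcases hd with rfl | rfl
          · exact absurd hR ((hrel α t t').2 (hsub rfl))
          · exact ih.1 t' (hsub rfl)
        · intro t h hs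
          obtain ⟨d, hd, hsub⟩ := happ
            [{TabFm.TR α t (Label.sk α φ t), TabFm.F φ (Label.sk α φ t)}] (ruleDia h)
          rw [List.mem_singleton] at hd
          subst hd
          have hTR : TabFm.TR α t (Label.sk α φ t) ∈ Br.fmls := hsub (Set.mem_insert _ _)
          have hF : TabFm.F φ (Label.sk α φ t) ∈ Br.fmls := hsub (Set.mem_insert_of_mem _ rfl)
          have hsk : Label.sk α φ t ∈ Lab Br.fmls :=
            Set.mem_insert_of_mem _ ⟨TabFm.TR α t (Label.sk α φ t), hTR,
              Set.mem_insert_of_mem _ rfl⟩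
          exact (ih.2 _ hF) (hs _ hsk ((hrel α t _).1 hTR))
    exact ⟨fun φ t => (hfm φ).1 t, fun φ t => (hfm φ).2 t,
      fun α t t' => (hrel α t t').1, fun α t t' => (hrel α t t').2⟩
end KmNotTableau
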